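/- Let f : ℝ^d → ℝ be convex and continuously differentiable with f(0) = 0 = min f. Let X : [0,∞) → ℝ^d be continuous, twice continuously differentiable on (0,∞), with X(0) = X₀ and Ẋ(t) → 0 as t → 0⁺, satisfying Ẍ(t) + (3/t)·Ẋ(t) + ∇f(X(t)) = 0 for all t > 0. Then the Lyapunov function ℰ(t) = t²·f(X(t)) + (1/2)·‖2X(t) + t·Ẋ(t)‖² is nonincreasing on [0,∞); in particular ℰ(t) ≤ ℰ(0) = 2‖X₀‖² for all t ≥ 0. -/

import Mathlib

open Set Filter Topology
open scoped RealInnerProductSpace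

/-- along a solution of the critical Nesterov flow for a convex `C¹`
potential `f` with `f(0) = 0 = min f`, the Lyapunov function
`ℰ(t) = t²·f(X(t)) + (1/2)·‖2X(t) + t·Ẋ(t)‖²` is nonincreasing on `[0,∞)`,
and `ℰ(t) ≤ ℰ(0) = 2‖X₀‖²` for all `t ≥ 0`. -/
theorem nesterov_lyapunov_nonincreasing (d : ℕ)
    (f : EuclideanSpace ℝ (Fin d) → ℝ)
    (hconv : ConvexOn ℝ Set.univ f) (hf : ContDiff ℝ 1 f)
    (hf0 : f 0 = 0) (hmin : ∀ x, 0 ≤ f x)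
    (X₀ : EuclideanSpace ℝ (Fin d)) (X X' X'' : ℝ → EuclideanSpace ℝ (Fin d))
    (hXcont : ContinuousOn X (Set.Ici 0))
    (hX' : ∀ t > (0:ℝ), HasDerivAt X (X' t) t)
    (hX'' : ∀ t > (0:ℝ), HasDerivAt X' (X'' t) t)
    (hX''cont : ContinuousOn X'' (Set.Ioi 0))
    (hX0 : X 0 = X₀)
    (hX'0 : Filter.Tendsto X' (nhdsWithin 0 (Set.Ioi 0)) (nhds 0))
    (hODE : ∀ t > (0:ℝ), X'' t + (3 / t) • X' t + gradient f (X t) = 0) :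
    AntitoneOn (fun t => t ^ 2 * f (X t) + (1/2) * ‖(2:ℝ) • X t + t • X' t‖ ^ 2)
      (Set.Ici 0) ∧
    ∀ t ≥ (0:ℝ),
      t ^ 2 * f (X t) + (1/2) * ‖(2:ℝ) • X t + t • X' t‖ ^ 2 ≤ 2 * ‖X₀‖ ^ 2 := by
  set E := fun t => t ^ 2 * f (X t) + (1/2) * ‖(2:ℝ) • X t + t • X' t‖ ^ 2 with hE
  have hfd : ∀ x, DifferentiableAt ℝ f x := fun x => (hf.differentiable one_ne_zero) x
  -- gradient inequality from convexity: f x ≤ ⟪∇f x, x⟫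
  have hgi : ∀ x, f x ≤ ⟪gradient f x, x⟫ := by
    intro x
    have hφ : ConvexOn ℝ Set.univ (fun s : ℝ => f (s • x)) := by
      refine ⟨convex_univ, fun a _ b _ p q hp hq hpq => ?_⟩
      have := hconv.2 (Set.mem_univ (a • x)) (Set.mem_univ (b • x)) hp hq hpq
      simpa [smul_smul, add_smul] using this
    have hF : HasFDerivAt f ((InnerProductSpace.toDual ℝ _) (gradient f x)) x :=
      hasGradientAt_iff_hasFDerivAt.mp (hfd x).hasGradientAt
    have hc : HasDerivAt (fun s : ℝ => s • x) x 1 := by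
      simpa using (hasDerivAt_id (1:ℝ)).smul_const x
    have hF1 : HasFDerivAt f ((InnerProductSpace.toDual ℝ _) (gradient f x)) ((1:ℝ) • x) := by
      rw [one_smul]; exact hF
    have hφ' : HasDerivAt (fun s : ℝ => f (s • x)) (⟪gradient f x, x⟫) 1 := by
      exact (hF1.comp_hasDerivAt 1 hc).congr_deriv (by simp)
    have hslope := hφ.slope_le_of_hasDerivAt (Set.mem_univ (0:ℝ)) (Set.mem_univ 1)
      one_pos hφ'
    simpa [slope, hf0] using hslope
  -- derivative of E on (0,∞)
  have hED : ∀ t ∈ Ioi (0:ℝ),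
      HasDerivAt E (2*t*(f (X t) - ⟪gradient f (X t), X t⟫)) t := by
    intro t ht
    have ht' : (0:ℝ) < t := ht
    have ht0 : t ≠ 0 := ne_of_gt ht'
    set g := gradient f (X t) with hg
    have hF : HasFDerivAt f ((InnerProductSpace.toDual ℝ _) g) (X t) :=
      hasGradientAt_iff_hasFDerivAt.mp (hfd (X t)).hasGradientAt
    have h1 : HasDerivAt (fun s => f (X s)) (⟪g, X' t⟫) t := by
      exact (hF.comp_hasDerivAt t (hX' t ht')).congr_deriv (by simp)
    have h2 : HasDerivAt (fun s => s^2 * f (X s))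
        (2*t*f (X t) + t^2 * ⟪g, X' t⟫) t := by
      have := (hasDerivAt_pow 2 t).mul h1
      refine this.congr_deriv ?_
      norm_num
    have key : (3:ℝ) • X' t + t • X'' t = -(t • g) := by
      have h := hODE t ht'
      have h3 : t • ((3/t) • X' t) = (3:ℝ) • X' t := by
        rw [smul_smul]
        congr 1
        field_simp
      calc (3:ℝ) • X' t + t • X'' t
          = t • (X'' t + (3/t) • X' t + g) - t • g := by
            rw [smul_add, smul_add, h3]; abel
        _ = -(t • g) := by rw [h, smul_zero, zero_sub]
    have hYd : HasDerivAt (fun s => (2:ℝ) • X s + s • X' s) (-(t • g)) t := by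
      have ha := (hX' t ht').const_smul (2:ℝ)
      have hb := (hasDerivAt_id t).smul (hX'' t ht')
      rw [← key]
      refine (ha.add hb).congr_deriv ?_
      simp only [id_eq, one_smul]
      module
    have hni : HasDerivAt
        (fun s => ⟪(2:ℝ) • X s + s • X' s, (2:ℝ) • X s + s • X' s⟫)
        (⟪(2:ℝ) • X t + t • X' t, -(t • g)⟫
          + ⟪-(t • g), (2:ℝ) • X t + t • X' t⟫) t :=
      hYd.inner ℝ hYd
    have hEeq : E = fun s => s^2 * f (X s)
        + (1/2) * ⟪(2:ℝ) • X s + s • X' s, (2:ℝ) • X s + s • X' s⟫ := by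
      funext s
      rw [hE, real_inner_self_eq_norm_sq]
    rw [hEeq]
    refine (h2.add (hni.const_mul (1/2))).congr_deriv ?_
    simp only [inner_add_left, inner_add_right, inner_smul_left, inner_smul_right,
      inner_neg_left, inner_neg_right, real_inner_comm (X t) g, real_inner_comm (X' t) g,
      RCLike.ofReal_real_eq_id, id, conj_trivial]
    ring
  -- continuity of E on [0,∞)
  have hZcont : ContinuousOn (fun s => s • X' s) (Ici 0) := by
    intro t ht
    rcases eq_or_lt_of_le (mem_Ici.mp ht) with h0 | hpos
    · subst h0
      have htend : Tendsto (fun s : ℝ => s • X' s) (𝓝[Ioi 0] 0)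
          (𝓝 ((0:ℝ) • (0 : EuclideanSpace ℝ (Fin d)))) :=
        (tendsto_id.mono_right nhdsWithin_le_nhds).smul hX'0
      have h1 : ContinuousWithinAt (fun s : ℝ => s • X' s) (Ioi 0) 0 := by
        unfold ContinuousWithinAt
        simpa using htend
      rw [← Set.Ioi_insert]
      exact h1.insert
    · exact (continuousAt_id.smul
        ((hX'' t hpos).differentiableAt.continuousAt)).continuousWithinAt
  have hEcont : ContinuousOn E (Ici 0) := by
    rw [hE]
    apply ContinuousOn.add
    · exact (continuous_pow 2).continuousOn.mul (hf.continuous.comp_continuousOn hXcont)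
    · exact continuousOn_const.mul
        (((hXcont.const_smul (2:ℝ)).add hZcont).norm.pow 2)
  have hmono : AntitoneOn E (Ici 0) := by
    apply antitoneOn_of_deriv_nonpos (convex_Ici 0) hEcont
    · intro x hx
      rw [interior_Ici] at hx
      exact (hED x hx).differentiableAt.differentiableWithinAt
    · intro x hx
      rw [interior_Ici] at hx
      rw [(hED x hx).deriv]
      have h1 : f (X x) - ⟪gradient f (X x), X x⟫ ≤ 0 := sub_nonpos.mpr (hgi (X x))
      have hx0 : (0:ℝ) < x := hx
      have h2 : (0:ℝ) ≤ 2 * x := by linarith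
      calc 2*x*(f (X x) - ⟪gradient f (X x), X x⟫) ≤ 2*x*0 :=
            mul_le_mul_of_nonneg_left h1 h2
        _ = 0 := by ring
  have hE0 : E 0 = 2 * ‖X₀‖^2 := by
    rw [hE]
    simp [hX0, norm_smul]
    ring
  refine ⟨hmono, fun t ht => ?_⟩
  calc E t ≤ E 0 := hmono (mem_Ici.mpr le_rfl) (mem_Ici.mpr ht) ht
    _ = 2 * ‖X₀‖^2 := hE0
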